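/- Let W, Q be σ-finite measures ≪ ρ with ∫ min(dW/dρ, dQ/dρ) dρ < ∞, and define β(ε) = inf{∫(1 − T) dQ : T measurable with values in [0,1], ∫ T dW ≤ ε} and η(γ) = ∫ min(dQ/dρ, γ·dW/dρ) dρ. Then β(ε) = sup_{γ ≥ 0} (η(γ) − γ·ε) for all real ε; in particular β is convex, nonincreasing, and lower semicontinuous as a supremum of affine functions. -/

import Mathlib

open MeasureTheory Set ENNReal Topology

variable {Ω : Type*} [MeasurableSpace Ω]

/-- `β(ε)` as an extended-real-valued function of a real Type I error bound `ε`: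
the infimum of `∫ (1 − T) dQ` over measurable `T : Ω → [0,1]` with `∫ T dW ≤ ε`
(for `ε < 0` no test qualifies and `β(ε) = ⊤`). -/
noncomputable def betaNPE (Q W : Measure Ω) (ε : ℝ) : EReal :=
  ⨅ (T : Ω → ℝ) (_ : Measurable T) (_ : ∀ x, T x ∈ Set.Icc (0 : ℝ) 1)
    (_ : ((∫⁻ x, ENNReal.ofReal (T x) ∂W : ℝ≥0∞) : EReal) ≤ (ε : EReal)),
    ((∫⁻ x, ENNReal.ofReal (1 - T x) ∂Q : ℝ≥0∞) : EReal)

/-- The primitive entropy spectrum of `Q` relative to `W`: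
`η(γ) = ∫ min(dQ/dρ, γ·dW/dρ) dρ`. -/
noncomputable def entSpecQW (Q W ρ : Measure Ω) (γ : ℝ) : ℝ≥0∞ :=
  ∫⁻ x, min (Q.rnDeriv ρ x) (ENNReal.ofReal γ * W.rnDeriv ρ x) ∂ρ

lemma coe_ereal_ofReal {ε : ℝ} (hε : 0 ≤ ε) :
    ((ENNReal.ofReal ε : ℝ≥0∞) : EReal) = (ε : EReal) := by
  rw [EReal.coe_ennreal_ofReal, max_eq_left hε]

lemma ennreal_coe_le_coe_real {x : ℝ≥0∞} {ε : ℝ} (hε : 0 ≤ ε) :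
    ((x : EReal) ≤ (ε : EReal)) ↔ x ≤ ENNReal.ofReal ε := by
  rw [← coe_ereal_ofReal hε, EReal.coe_ennreal_le_coe_ennreal_iff]

lemma betaNPE_le (Q W : Measure Ω) (ε : ℝ) {T : Ω → ℝ} (hT : Measurable T)
    (hTr : ∀ x, T x ∈ Set.Icc (0 : ℝ) 1)
    (hfeas : ((∫⁻ x, ENNReal.ofReal (T x) ∂W : ℝ≥0∞) : EReal) ≤ (ε : EReal)) :
    betaNPE Q W ε ≤ ((∫⁻ x, ENNReal.ofReal (1 - T x) ∂Q : ℝ≥0∞) : EReal) :=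
  iInf_le_of_le T (iInf_le_of_le hT (iInf_le_of_le hTr (iInf_le _ hfeas)))

lemma entSpec_ne_top (Q W ρ : Measure Ω)
    (h1 : ∫⁻ x, min (W.rnDeriv ρ x) (Q.rnDeriv ρ x) ∂ρ ≠ ⊤) (γ : ℝ) :
    entSpecQW Q W ρ γ ≠ ⊤ := by
  have hb : ∀ x, min (Q.rnDeriv ρ x) (ENNReal.ofReal γ * W.rnDeriv ρ x)
      ≤ max 1 (ENNReal.ofReal γ) * min (W.rnDeriv ρ x) (Q.rnDeriv ρ x) := by
    intro x
    rcases le_total (ENNReal.ofReal γ) 1 with h | h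
    · calc min (Q.rnDeriv ρ x) (ENNReal.ofReal γ * W.rnDeriv ρ x)
          ≤ min (Q.rnDeriv ρ x) (1 * W.rnDeriv ρ x) := by
            exact min_le_min le_rfl (mul_le_mul_left h _)
      _ = min (W.rnDeriv ρ x) (Q.rnDeriv ρ x) := by rw [one_mul, min_comm]
      _ ≤ max 1 (ENNReal.ofReal γ) * min (W.rnDeriv ρ x) (Q.rnDeriv ρ x) :=
          le_mul_of_one_le_left zero_le (le_max_left _ _)
    · calc min (Q.rnDeriv ρ x) (ENNReal.ofReal γ * W.rnDeriv ρ x)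
          ≤ min (ENNReal.ofReal γ * Q.rnDeriv ρ x) (ENNReal.ofReal γ * W.rnDeriv ρ x) := by
            exact min_le_min (le_mul_of_one_le_left zero_le h) le_rfl
      _ = ENNReal.ofReal γ * min (Q.rnDeriv ρ x) (W.rnDeriv ρ x) := by
            rw [min_mul_mul_left]
      _ ≤ max 1 (ENNReal.ofReal γ) * min (W.rnDeriv ρ x) (Q.rnDeriv ρ x) := by
            rw [min_comm (Q.rnDeriv ρ x)]
            exact mul_le_mul_left (le_max_right _ _) _
  have : entSpecQW Q W ρ γ ≤ max 1 (ENNReal.ofReal γ)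
      * ∫⁻ x, min (W.rnDeriv ρ x) (Q.rnDeriv ρ x) ∂ρ := by
    rw [← lintegral_const_mul _ ((Measure.measurable_rnDeriv W ρ).min
      (Measure.measurable_rnDeriv Q ρ))]
    exact lintegral_mono hb
  exact ne_top_of_le_ne_top (ENNReal.mul_ne_top (by simp [ENNReal.ofReal_lt_top.ne]) h1) this

lemma weak_duality (Q W ρ : Measure Ω)
    [SigmaFinite W] [SigmaFinite Q] [SigmaFinite ρ]
    (hW : W ≪ ρ) (hQ : Q ≪ ρ) {ε γ : ℝ} (hε : 0 ≤ ε) (hγ : 0 ≤ γ)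
    {T : Ω → ℝ} (hT : Measurable T) (hTr : ∀ x, T x ∈ Set.Icc (0 : ℝ) 1)
    (hfeas : ((∫⁻ x, ENNReal.ofReal (T x) ∂W : ℝ≥0∞) : EReal) ≤ (ε : EReal)) :
    (entSpecQW Q W ρ γ : EReal) - ((γ * ε : ℝ) : EReal)
      ≤ ((∫⁻ x, ENNReal.ofReal (1 - T x) ∂Q : ℝ≥0∞) : EReal) := by
  set w := W.rnDeriv ρ with hw_def
  set q := Q.rnDeriv ρ with hq_def
  have hw : Measurable w := Measure.measurable_rnDeriv W ρ
  have hq : Measurable q := Measure.measurable_rnDeriv Q ρ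
  have hWd : ρ.withDensity w = W := Measure.withDensity_rnDeriv_eq W ρ hW
  have hQd : ρ.withDensity q = Q := Measure.withDensity_rnDeriv_eq Q ρ hQ
  have hT1 : Measurable fun x => ENNReal.ofReal (T x) := hT.ennreal_ofReal
  have hT2 : Measurable fun x => ENNReal.ofReal (1 - T x) :=
    (measurable_const.sub hT).ennreal_ofReal
  -- key pointwise bound
  have hpt : ∀ x, min (q x) (ENNReal.ofReal γ * w x)
      ≤ ENNReal.ofReal (1 - T x) * q x
        + ENNReal.ofReal (T x) * (ENNReal.ofReal γ * w x) := by
    intro x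
    have hsum : ENNReal.ofReal (1 - T x) + ENNReal.ofReal (T x) = 1 := by
      rw [← ENNReal.ofReal_add (by linarith [(hTr x).2]) (hTr x).1, sub_add_cancel,
        ENNReal.ofReal_one]
    calc min (q x) (ENNReal.ofReal γ * w x)
        = (ENNReal.ofReal (1 - T x) + ENNReal.ofReal (T x))
            * min (q x) (ENNReal.ofReal γ * w x) := by rw [hsum, one_mul]
      _ = ENNReal.ofReal (1 - T x) * min (q x) (ENNReal.ofReal γ * w x)
            + ENNReal.ofReal (T x) * min (q x) (ENNReal.ofReal γ * w x) := by
          rw [add_mul]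
      _ ≤ _ := add_le_add (mul_le_mul_right (min_le_left _ _) _)
            (mul_le_mul_right (min_le_right _ _) _)
  have hkey : entSpecQW Q W ρ γ
      ≤ (∫⁻ x, ENNReal.ofReal (1 - T x) ∂Q) + ENNReal.ofReal (γ * ε) := by
    have h2 : entSpecQW Q W ρ γ
        ≤ ∫⁻ x, (ENNReal.ofReal (1 - T x) * q x
            + ENNReal.ofReal (T x) * (ENNReal.ofReal γ * w x)) ∂ρ := lintegral_mono hpt
    rw [lintegral_add_left (f := fun x => ENNReal.ofReal (1 - T x) * q x) (hT2.mul hq)] at h2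
    have e1 : ∫⁻ x, ENNReal.ofReal (1 - T x) * q x ∂ρ
        = ∫⁻ x, ENNReal.ofReal (1 - T x) ∂Q := by
      conv_rhs => rw [← hQd]
      rw [lintegral_withDensity_eq_lintegral_mul ρ hq hT2]
      exact lintegral_congr fun x => (mul_comm _ _)
    have e2 : ∫⁻ x, ENNReal.ofReal (T x) * (ENNReal.ofReal γ * w x) ∂ρ
        = ENNReal.ofReal γ * ∫⁻ x, ENNReal.ofReal (T x) ∂W := by
      have e3 : ∫⁻ x, ENNReal.ofReal (T x) ∂W = ∫⁻ x, w x * ENNReal.ofReal (T x) ∂ρ := by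
        rw [← hWd, lintegral_withDensity_eq_lintegral_mul ρ hw hT1]; rfl
      rw [e3, ← lintegral_const_mul (f := fun x => w x * ENNReal.ofReal (T x)) _ (hw.mul hT1)]
      exact lintegral_congr fun x => by ring
    rw [e1, e2] at h2
    refine h2.trans (add_le_add le_rfl ?_)
    have hfeas' : ∫⁻ x, ENNReal.ofReal (T x) ∂W ≤ ENNReal.ofReal ε :=
      (ennreal_coe_le_coe_real hε).1 hfeas
    calc ENNReal.ofReal γ * ∫⁻ x, ENNReal.ofReal (T x) ∂W
        ≤ ENNReal.ofReal γ * ENNReal.ofReal ε := mul_le_mul_right hfeas' _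
      _ = ENNReal.ofReal (γ * ε) := (ENNReal.ofReal_mul hγ).symm
  -- move to EReal
  have hkey' : (entSpecQW Q W ρ γ : EReal)
      ≤ ((∫⁻ x, ENNReal.ofReal (1 - T x) ∂Q : ℝ≥0∞) : EReal) + ((γ * ε : ℝ) : EReal) := by
    rw [← coe_ereal_ofReal (mul_nonneg hγ hε), ← EReal.coe_ennreal_add]
    exact EReal.coe_ennreal_le_coe_ennreal_iff.2 hkey
  exact EReal.sub_le_of_le_add hkey'

lemma ereal_iSup_coe_le {f : ℕ → ℝ≥0∞} {Y : EReal} (h : ∀ n, (f n : EReal) ≤ Y) :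
    ((⨆ n, f n : ℝ≥0∞) : EReal) ≤ Y := by
  induction Y with
  | bot =>
    have := (le_bot_iff.1 (h 0))
    simp at this
  | coe y =>
    have hy : (0:ℝ) ≤ y := by
      have h0 : (0 : EReal) ≤ (y : EReal) := le_trans (EReal.coe_ennreal_nonneg _) (h 0)
      exact_mod_cast h0
    have : ∀ n, f n ≤ ENNReal.ofReal y := fun n =>
      (ennreal_coe_le_coe_real hy).1 (h n)
    rw [← coe_ereal_ofReal hy]
    exact EReal.coe_ennreal_le_coe_ennreal_iff.2 (iSup_le this)
  | top => exact le_top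
lemma strong_duality (Q W ρ : Measure Ω)
    [SigmaFinite W] [SigmaFinite Q] [SigmaFinite ρ]
    (hW : W ≪ ρ) (hQ : Q ≪ ρ)
    (h1 : ∫⁻ x, min (W.rnDeriv ρ x) (Q.rnDeriv ρ x) ∂ρ ≠ ⊤)
    {ε : ℝ} (hε : 0 ≤ ε) :
    betaNPE Q W ε ≤ ⨆ (γ : ℝ) (_ : 0 ≤ γ),
      ((entSpecQW Q W ρ γ : EReal) - ((γ * ε : ℝ) : EReal)) := by
  set w := W.rnDeriv ρ with hw_def
  set q := Q.rnDeriv ρ with hq_def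
  have hw : Measurable w := Measure.measurable_rnDeriv W ρ
  have hq : Measurable q := Measure.measurable_rnDeriv Q ρ
  have hWd : ρ.withDensity w = W := Measure.withDensity_rnDeriv_eq W ρ hW
  have hQd : ρ.withDensity q = Q := Measure.withDensity_rnDeriv_eq Q ρ hQ
  have hWA : ∀ S : Set Ω, MeasurableSet S → W S = ∫⁻ x in S, w x ∂ρ := by
    intro S hS; rw [← hWd, withDensity_apply _ hS]
  have hQA : ∀ S : Set Ω, MeasurableSet S → Q S = ∫⁻ x in S, q x ∂ρ := by
    intro S hS; rw [← hQd, withDensity_apply _ hS]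
  set A : ℝ → Set Ω := fun γ => {x | ENNReal.ofReal γ * w x < q x} with hA_def
  have hAmeas : ∀ γ, MeasurableSet (A γ) := fun γ => measurableSet_lt (hw.const_mul _) hq
  have hAanti : ∀ {γ γ' : ℝ}, γ ≤ γ' → A γ' ⊆ A γ := by
    intro γ γ' h x hx
    exact lt_of_le_of_lt (mul_le_mul_left (ENNReal.ofReal_le_ofReal h) _) hx
  have hmw0 : MeasurableSet {x | w x = 0} := hw (measurableSet_singleton 0)
  have hNw0 : W {x | w x = 0} = 0 := by
    rw [hWA _ hmw0,
      setLIntegral_congr_fun hmw0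
        (fun x hx => hx), lintegral_zero]
  have hNwtop : W {x | w x = ⊤} = 0 := by
    apply hW
    have h2 := Measure.rnDeriv_lt_top W ρ
    rw [ae_iff] at h2
    convert h2 using 2
    ext x; simp [lt_top_iff_ne_top, hw_def]
  have hNqtop : W {x | q x = ⊤} = 0 := by
    apply hW
    have h2 := Measure.rnDeriv_lt_top Q ρ
    rw [ae_iff] at h2
    convert h2 using 2
    ext x; simp [lt_top_iff_ne_top, hq_def]
  have hgfin : ∀ {γ : ℝ}, 0 < γ → W (A γ) ≠ ⊤ := by
    intro γ hγ
    have hbound : min 1 (ENNReal.ofReal γ) * W (A γ)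
        ≤ ∫⁻ x, min (w x) (q x) ∂ρ := by
      rw [hWA _ (hAmeas γ), ← lintegral_const_mul _ hw]
      calc ∫⁻ x in A γ, min 1 (ENNReal.ofReal γ) * w x ∂ρ
          ≤ ∫⁻ x in A γ, min (w x) (q x) ∂ρ := by
            apply setLIntegral_mono' (hAmeas γ)
            intro x hx
            rw [← min_mul_mul_right, one_mul]
            exact min_le_min le_rfl (le_of_lt hx)
        _ ≤ ∫⁻ x, min (w x) (q x) ∂ρ := setLIntegral_le_lintegral _ _
    intro htop
    rw [htop] at hbound
    have hne0 : min 1 (ENNReal.ofReal γ) ≠ 0 :=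
      (lt_min one_pos (ENNReal.ofReal_pos.2 hγ)).ne'
    rw [ENNReal.mul_top hne0] at hbound
    exact h1 (top_le_iff.1 hbound)
  rcases eq_or_lt_of_le hε with hε0 | hεpos
  · -- ε = 0 : use the test 1_{w = 0}
    have hε0' : ε = 0 := hε0.symm
    subst hε0'
    set T : Ω → ℝ := fun x => if w x = 0 then 1 else 0 with hT_def
    have hTmeas : Measurable T :=
      Measurable.ite (hw (measurableSet_singleton 0)) measurable_const measurable_const
    have hTr : ∀ x, T x ∈ Set.Icc (0:ℝ) 1 := by
      intro x; simp only [hT_def]; split_ifs <;> simp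
    have hWint : ∫⁻ x, ENNReal.ofReal (T x) ∂W = 0 := by
      have heq : (fun x => ENNReal.ofReal (T x))
          = fun x => Set.indicator {x | w x = 0} (fun _ => 1) x := by
        funext x
        by_cases hx : w x = 0 <;>
          simp [hT_def, hx, Set.indicator_apply, Set.mem_setOf_eq]
      rw [heq, lintegral_indicator hmw0, setLIntegral_one, hNw0]
    have hQint : ∫⁻ x, ENNReal.ofReal (1 - T x) ∂Q = Q {x | w x = 0}ᶜ := by
      have heq : (fun x => ENNReal.ofReal (1 - T x))
          = fun x => Set.indicator {x | w x = 0}ᶜ (fun _ => 1) x := by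
        funext x
        by_cases hx : w x = 0 <;>
          simp [hT_def, hx, Set.indicator_apply, Set.mem_setOf_eq]
      rw [heq, lintegral_indicator hmw0.compl, setLIntegral_one]
    have hpt : ∀ x, (⨆ n : ℕ, min (q x) (ENNReal.ofReal (n:ℝ) * w x))
        = Set.indicator {x | w x = 0}ᶜ q x := by
      intro x
      by_cases hx : w x = 0
      · simp [hx, Set.indicator_apply, Set.mem_setOf_eq]
      · have h3 : (⨆ n : ℕ, min (q x) (ENNReal.ofReal (n:ℝ) * w x))
            = q x ⊓ ⨆ n : ℕ, (n:ℝ≥0∞) * w x := by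
          rw [inf_iSup_eq]
          simp only [ENNReal.ofReal_natCast]
        rw [h3, ← ENNReal.iSup_mul, iSup_natCast, ENNReal.top_mul hx]
        simp [Set.indicator_apply, Set.mem_setOf_eq, hx]
    have hsup : (⨆ n : ℕ, entSpecQW Q W ρ (n:ℝ)) = Q {x | w x = 0}ᶜ := by
      have hmeas : ∀ n : ℕ, Measurable fun x => min (q x) (ENNReal.ofReal (n:ℝ) * w x) :=
        fun n => hq.min (hw.const_mul _)
      have hmono : Monotone fun (n : ℕ) (x : Ω) => min (q x) (ENNReal.ofReal (n:ℝ) * w x) := by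
        intro n m hnm x
        exact min_le_min le_rfl (mul_le_mul_left
          (ENNReal.ofReal_le_ofReal (by exact_mod_cast hnm)) _)
      have h4 := lintegral_iSup (μ := ρ) hmeas hmono
      simp only [entSpecQW, ← hw_def, ← hq_def]
      rw [← h4, hQA _ hmw0.compl,
        ← lintegral_indicator hmw0.compl]
      exact lintegral_congr hpt
    refine le_trans (betaNPE_le Q W 0 hTmeas hTr ?_) ?_
    · rw [hWint]; simp
    · rw [hQint, ← hsup]
      apply ereal_iSup_coe_le
      intro n
      refine le_iSup₂_of_le (n:ℝ) (Nat.cast_nonneg n) ?_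
      rw [mul_zero]
      simp
  by_cases hg0 : W (A 0) ≤ ENNReal.ofReal ε
  · -- trivial regime : the test 1_{q > 0} has level ≤ ε and value 0
    set T : Ω → ℝ := fun x => if x ∈ A 0 then 1 else 0 with hT_def
    have hTmeas : Measurable T :=
      Measurable.ite (hAmeas 0) measurable_const measurable_const
    have hTr : ∀ x, T x ∈ Set.Icc (0:ℝ) 1 := by
      intro x; simp only [hT_def]; split_ifs <;> simp
    have hWint : ∫⁻ x, ENNReal.ofReal (T x) ∂W = W (A 0) := by
      have heq : (fun x => ENNReal.ofReal (T x))
          = fun x => Set.indicator (A 0) (fun _ => 1) x := by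
        funext x
        by_cases hx : x ∈ A 0 <;> simp [hT_def, hx, Set.indicator_apply]
      rw [heq, lintegral_indicator (hAmeas 0), setLIntegral_one]
    have hQint : ∫⁻ x, ENNReal.ofReal (1 - T x) ∂Q = Q ((A 0)ᶜ) := by
      have heq : (fun x => ENNReal.ofReal (1 - T x))
          = fun x => Set.indicator ((A 0)ᶜ) (fun _ => 1) x := by
        funext x
        by_cases hx : x ∈ A 0 <;> simp [hT_def, hx, Set.indicator_apply]
      rw [heq, lintegral_indicator (hAmeas 0).compl, setLIntegral_one]
    have hQ0 : Q ((A 0)ᶜ) = 0 := by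
      rw [hQA _ (hAmeas 0).compl,
        setLIntegral_congr_fun (hAmeas 0).compl (fun x hx => ?_),
        lintegral_zero]
      have hx' : ¬ (ENNReal.ofReal 0 * w x < q x) := hx
      rw [ENNReal.ofReal_zero, zero_mul] at hx'
      exact le_zero_iff.1 (not_lt.1 hx')
    have hη0 : entSpecQW Q W ρ 0 = 0 := by
      simp only [entSpecQW, ENNReal.ofReal_zero, zero_mul]
      simp
    refine le_trans (betaNPE_le Q W ε hTmeas hTr ?_) ?_
    · rw [hWint]; exact (ennreal_coe_le_coe_real hε).2 hg0
    · rw [hQint, hQ0]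
      refine le_iSup₂_of_le 0 le_rfl ?_
      rw [hη0, zero_mul]
      simp
  -- main regime : 0 < ε < W (A 0)
  push_neg at hg0
  have hSne : ∃ γ : ℝ, 0 < γ ∧ W (A γ) ≤ ENNReal.ofReal ε := by
    have hanti : Antitone fun n : ℕ => A ((n:ℝ) + 1) := fun n m hnm =>
      hAanti (by exact_mod_cast add_le_add_left (Nat.cast_le.2 hnm) 1)
    have hnull : W (⋂ n : ℕ, A ((n:ℝ) + 1)) = 0 := by
      apply measure_mono_null _
        (measure_union_null hNw0 (measure_union_null hNwtop hNqtop))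
      intro x hx
      simp only [Set.mem_iInter] at hx
      by_cases hw0 : w x = 0
      · exact Or.inl hw0
      by_cases hwt : w x = ⊤
      · exact Or.inr (Or.inl hwt)
      by_cases hqt : q x = ⊤
      · exact Or.inr (Or.inr hqt)
      exfalso
      obtain ⟨n, hn⟩ := exists_nat_ge ((q x).toReal / (w x).toReal)
      have hcon : ENNReal.ofReal ((n:ℝ) + 1) * w x < q x := hx n
      have hwpos : 0 < (w x).toReal := ENNReal.toReal_pos hw0 hwt
      have hle : (q x).toReal ≤ ((n:ℝ) + 1) * (w x).toReal := by
        rw [div_le_iff₀ hwpos] at hn; nlinarith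
      apply absurd hcon (not_lt.2 ?_)
      calc q x = ENNReal.ofReal (q x).toReal := (ENNReal.ofReal_toReal hqt).symm
        _ ≤ ENNReal.ofReal (((n:ℝ)+1) * (w x).toReal) := ENNReal.ofReal_le_ofReal hle
        _ = ENNReal.ofReal ((n:ℝ)+1) * ENNReal.ofReal (w x).toReal :=
            ENNReal.ofReal_mul (by positivity)
        _ = ENNReal.ofReal ((n:ℝ)+1) * w x := by rw [ENNReal.ofReal_toReal hwt]
    have htends := tendsto_measure_iInter_atTop (μ := W) (s := fun n : ℕ => A ((n:ℝ)+1))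
      (fun n => (hAmeas _).nullMeasurableSet) hanti ⟨0, hgfin (by norm_num)⟩
    rw [hnull] at htends
    obtain ⟨n, hn⟩ := (htends.eventually_lt_const (ENNReal.ofReal_pos.2 hεpos)).exists
    exact ⟨(n:ℝ)+1, by positivity, hn.le⟩
  obtain ⟨γ₀, hγ₀pos, hγ₀⟩ := hSne
  set S : Set ℝ := {γ : ℝ | 0 ≤ γ ∧ W (A γ) ≤ ENNReal.ofReal ε} with hS_def
  have hSne' : S.Nonempty := ⟨γ₀, hγ₀pos.le, hγ₀⟩
  have hSbdd : BddBelow S := ⟨0, fun x hx => hx.1⟩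
  set γ' := sInf S with hγ'_def
  have hγ'0 : 0 ≤ γ' := le_csInf hSne' fun x hx => hx.1
  have hγ'le : ∀ {t : ℝ}, γ' < t → W (A t) ≤ ENNReal.ofReal ε := by
    intro t ht
    obtain ⟨s, hsS, hst⟩ := (csInf_lt_iff hSbdd hSne').1 ht
    exact le_trans (measure_mono (hAanti hst.le)) hsS.2
  have hgγ' : W (A γ') ≤ ENNReal.ofReal ε := by
    have hsub : A γ' ⊆ (⋃ n : ℕ, A (γ' + 1/((n:ℝ)+1)))
        ∪ ({x | w x = ⊤} ∪ {x | q x = ⊤}) := by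
      intro x hx
      by_cases hwt : w x = ⊤
      · exact Or.inr (Or.inl hwt)
      by_cases hqt : q x = ⊤
      · exact Or.inr (Or.inr hqt)
      left
      rw [Set.mem_iUnion]
      by_cases hw0 : w x = 0
      · have hx2 : ENNReal.ofReal γ' * w x < q x := hx
        have hq0 : 0 < q x := by
          rw [hw0, mul_zero] at hx2; exact hx2
        refine ⟨0, ?_⟩
        show ENNReal.ofReal _ * w x < q x
        rw [hw0, mul_zero]; exact hq0
      · have hwpos : 0 < (w x).toReal := ENNReal.toReal_pos hw0 hwt
        have hqx : γ' * (w x).toReal < (q x).toReal := by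
          have h5 : ENNReal.ofReal (γ' * (w x).toReal) < q x := by
            rw [ENNReal.ofReal_mul hγ'0, ENNReal.ofReal_toReal hwt]; exact hx
          exact (ENNReal.ofReal_lt_iff_lt_toReal (by positivity) hqt).1 h5
        have hδ : 0 < (q x).toReal / (w x).toReal - γ' :=
          sub_pos.2 ((lt_div_iff₀ hwpos).2 hqx)
        obtain ⟨n, hn⟩ := exists_nat_one_div_lt hδ
        refine ⟨n, ?_⟩
        show ENNReal.ofReal (γ' + 1/((n:ℝ)+1)) * w x < q x
        have h2 : (γ' + 1/((n:ℝ)+1)) * (w x).toReal < (q x).toReal := by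
          have h6 : γ' + 1/((n:ℝ)+1) < (q x).toReal / (w x).toReal := by linarith
          exact (lt_div_iff₀ hwpos).1 h6
        have hqpos : 0 < (q x).toReal := lt_of_le_of_lt (by positivity) h2
        calc ENNReal.ofReal (γ' + 1/((n:ℝ)+1)) * w x
            = ENNReal.ofReal ((γ' + 1/((n:ℝ)+1)) * (w x).toReal) := by
              rw [ENNReal.ofReal_mul (by positivity), ENNReal.ofReal_toReal hwt]
          _ < q x := by
              rw [← ENNReal.ofReal_toReal hqt]
              exact (ENNReal.ofReal_lt_ofReal_iff hqpos).2 h2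
    have hmono : Monotone fun n : ℕ => A (γ' + 1/((n:ℝ)+1)) := by
      intro n m hnm
      apply hAanti
      have : 1/((m:ℝ)+1) ≤ 1/((n:ℝ)+1) := by
        apply one_div_le_one_div_of_le (by positivity)
        have := (Nat.cast_le (α := ℝ)).2 hnm
        linarith
      linarith
    calc W (A γ') ≤ W ((⋃ n : ℕ, A (γ' + 1/((n:ℝ)+1)))
          ∪ ({x | w x = ⊤} ∪ {x | q x = ⊤})) := measure_mono hsub
      _ ≤ W (⋃ n : ℕ, A (γ' + 1/((n:ℝ)+1)))
          + W ({x | w x = ⊤} ∪ {x | q x = ⊤}) := measure_union_le _ _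
      _ = W (⋃ n : ℕ, A (γ' + 1/((n:ℝ)+1))) := by
          rw [measure_union_null hNwtop hNqtop, add_zero]
      _ ≤ ENNReal.ofReal ε := by
          rw [hmono.directed_le.measure_iUnion]
          refine iSup_le fun n => hγ'le ?_
          have : 0 < 1/((n:ℝ)+1) := by positivity
          linarith
  have hγ'pos : 0 < γ' := by
    rcases hγ'0.eq_or_lt with h | h
    · exfalso
      apply absurd hgγ' (not_le.2 ?_)
      rw [← h]
      exact hg0
    · exact h
  -- the randomized Neyman–Pearson test at level γ'
  set oγ := ENNReal.ofReal γ' with hoγ_def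
  have hoγ0 : oγ ≠ 0 := (ENNReal.ofReal_pos.2 hγ'pos).ne'
  set B : Set Ω := ({x | w x = 0} ∩ {x | 0 < q x}) ∪
      (({x | 0 < w x} ∩ {x | w x < ⊤}) ∩ {x | oγ * w x ≤ q x}) with hB_def
  have hBmeas : MeasurableSet B :=
    (hmw0.inter (measurableSet_lt measurable_const hq)).union
      (((measurableSet_lt measurable_const hw).inter
        (measurableSet_lt hw measurable_const)).inter
        (measurableSet_le (hw.const_mul _) hq))
  have hAB : A γ' ⊆ B := by
    intro x hx
    have hx2 : oγ * w x < q x := hx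
    by_cases hw0 : w x = 0
    · refine Or.inl ⟨hw0, ?_⟩
      rw [hw0, mul_zero] at hx2; exact hx2
    · have hwt : w x ≠ ⊤ := by
        intro hwt
        rw [hwt, ENNReal.mul_top hoγ0] at hx2
        exact not_top_lt hx2
      exact Or.inr ⟨⟨pos_iff_ne_zero.2 hw0, lt_top_iff_ne_top.2 hwt⟩, hx2.le⟩
  have hBcomp : ∀ x, x ∉ B → q x ≤ oγ * w x := by
    intro x hx
    by_cases hw0 : w x = 0
    · have h2 : ¬ 0 < q x := fun hq0 => hx (Or.inl ⟨hw0, hq0⟩)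
      rw [le_zero_iff.1 (not_lt.1 h2)]
      exact zero_le
    · by_cases hwt : w x = ⊤
      · rw [hwt, ENNReal.mul_top hoγ0]; exact le_top
      · have h2 : ¬ oγ * w x ≤ q x := fun hle =>
          hx (Or.inr ⟨⟨pos_iff_ne_zero.2 hw0, lt_top_iff_ne_top.2 hwt⟩, hle⟩)
        exact (not_le.1 h2).le
  -- left limit along θ n ↑ γ'
  set θ : ℕ → ℝ := fun n => γ' - γ'/((n:ℝ)+2) with hθ_def
  have hθpos : ∀ n, 0 < θ n := by
    intro n
    have h2 : γ'/((n:ℝ)+2) < γ' := by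
      apply div_lt_self hγ'pos
      have := Nat.cast_nonneg (α := ℝ) n
      linarith
    simp only [hθ_def]
    linarith
  have hθlt : ∀ n, θ n < γ' := fun n =>
    sub_lt_self _ (div_pos hγ'pos (by positivity))
  have hθmono : Monotone θ := by
    intro n m hnm
    simp only [hθ_def]
    have h2 : γ'/((m:ℝ)+2) ≤ γ'/((n:ℝ)+2) := by
      apply div_le_div_of_nonneg_left hγ'pos.le (by positivity)
      have := (Nat.cast_le (α := ℝ)).2 hnm
      linarith
    linarith
  have hBsub : B ⊆ ⋂ n, A (θ n) := by
    intro x hx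
    rw [Set.mem_iInter]
    intro n
    show ENNReal.ofReal (θ n) * w x < q x
    rcases hx with ⟨hw0, hq0⟩ | ⟨⟨hwpos, hwlt⟩, hle⟩
    · rw [hw0, mul_zero]; exact hq0
    · calc ENNReal.ofReal (θ n) * w x
            < oγ * w x := by
                            exact ENNReal.mul_lt_mul_left hwpos.ne' hwlt.ne ((ENNReal.ofReal_lt_ofReal_iff hγ'pos).2 (hθlt n))
        _ ≤ q x := hle
  have hIsub : (⋂ n, A (θ n)) ⊆ B ∪ {x | w x = ⊤} := by
    intro x hx
    rw [Set.mem_iInter] at hx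
    have hx' : ∀ n, ENNReal.ofReal (θ n) * w x < q x := fun n => hx n
    by_cases hwt : w x = ⊤
    · exact Or.inr hwt
    left
    by_cases hw0 : w x = 0
    · refine Or.inl ⟨hw0, ?_⟩
      have h2 := hx' 0
      rw [hw0, mul_zero] at h2; exact h2
    · refine Or.inr ⟨⟨pos_iff_ne_zero.2 hw0, lt_top_iff_ne_top.2 hwt⟩, ?_⟩
      by_contra hlt0
      have hlt : q x < oγ * w x := not_le.1 hlt0
      have hqt : q x ≠ ⊤ := ne_top_of_lt hlt
      have hwpos : 0 < (w x).toReal := ENNReal.toReal_pos hw0 hwt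
      have hql : (q x).toReal < γ' * (w x).toReal := by
        have h2 : q x < ENNReal.ofReal (γ' * (w x).toReal) := by
          rw [ENNReal.ofReal_mul hγ'0, ENNReal.ofReal_toReal hwt]; exact hlt
        exact (ENNReal.lt_ofReal_iff_toReal_lt hqt).1 h2
      have hδ : 0 < γ' - (q x).toReal / (w x).toReal :=
        sub_pos.2 ((div_lt_iff₀ hwpos).2 hql)
      obtain ⟨n, hn⟩ := exists_nat_gt (γ' / (γ' - (q x).toReal / (w x).toReal))
      have hγn : γ' < (γ' - (q x).toReal / (w x).toReal) * ((n:ℝ) + 2) := by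
        rw [div_lt_iff₀ hδ] at hn
        nlinarith
    
      have hθn : (q x).toReal / (w x).toReal < θ n := by
        have h2 : γ'/((n:ℝ)+2) < γ' - (q x).toReal/(w x).toReal := by
          rw [div_lt_iff₀ (by positivity)]
          linarith
        simp only [hθ_def]
        linarith
      have h3 : (q x).toReal < θ n * (w x).toReal := (div_lt_iff₀ hwpos).1 hθn
      apply absurd (hx' n) (not_lt.2 ?_)
      calc q x = ENNReal.ofReal (q x).toReal := (ENNReal.ofReal_toReal hqt).symm
        _ ≤ ENNReal.ofReal (θ n * (w x).toReal) := ENNReal.ofReal_le_ofReal h3.le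
        _ = ENNReal.ofReal (θ n) * w x := by
            rw [ENNReal.ofReal_mul (hθpos n).le, ENNReal.ofReal_toReal hwt]
  have hWBfin : W B ≠ ⊤ :=
    ne_top_of_le_ne_top (hgfin (hθpos 0))
      (measure_mono (hBsub.trans (Set.iInter_subset _ 0)))
  have hWBge : ENNReal.ofReal ε ≤ W B := by
    have hWBeq : W B = W (⋂ n, A (θ n)) := by
      apply le_antisymm (measure_mono hBsub)
      calc W (⋂ n, A (θ n)) ≤ W (B ∪ {x | w x = ⊤}) := measure_mono hIsub
        _ ≤ W B + W {x | w x = ⊤} := measure_union_le _ _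
        _ = W B := by rw [hNwtop, add_zero]
    have htends := tendsto_measure_iInter_atTop (μ := W) (s := fun n => A (θ n))
      (fun n => (hAmeas _).nullMeasurableSet)
      (fun n m hnm => hAanti (hθmono hnm)) ⟨0, hgfin (hθpos 0)⟩
    rw [← hWBeq] at htends
    refine ge_of_tendsto' htends ?_
    intro n
    have hnot : θ n ∉ S := notMem_of_lt_csInf (hθlt n) hSbdd
    have h2 : ¬ (W (A (θ n)) ≤ ENNReal.ofReal ε) := fun h => hnot ⟨(hθpos n).le, h⟩
    exact (not_le.1 h2).le
  -- the set D and the randomization constant c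
  set D : Set Ω := B \ A γ' with hD_def
  have hDmeas : MeasurableSet D := hBmeas.diff (hAmeas γ')
  have hDq : ∀ x ∈ D, q x = oγ * w x := by
    intro x hx
    have hnA : ¬ (oγ * w x < q x) := hx.2
    rcases hx.1 with ⟨hw0, hq0⟩ | ⟨⟨hwpos, hwlt⟩, hle⟩
    · exfalso
      apply hnA
      rw [hw0, mul_zero]; exact hq0
    · exact le_antisymm (not_lt.1 hnA) hle
  have hWAD : W (A γ') + W D = W B := by
    rw [← measure_union disjoint_sdiff_right hDmeas, Set.union_diff_cancel hAB]
  have ha_fin : W (A γ') ≠ ⊤ := ne_top_of_le_ne_top ENNReal.ofReal_ne_top hgγ'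
  have hd_fin : W D ≠ ⊤ := by
    intro h; apply hWBfin; rw [← hWAD, h, add_top]
  set c : ℝ := if W D = 0 then 0 else (ε - (W (A γ')).toReal)/(W D).toReal with hc_def
  have hatr : (W (A γ')).toReal ≤ ε := ENNReal.toReal_le_of_le_ofReal hε hgγ'
  have hc0 : 0 ≤ c := by
    rw [hc_def]; split_ifs with h
    · exact le_rfl
    · exact div_nonneg (sub_nonneg.2 hatr) ENNReal.toReal_nonneg
  have hub : ε ≤ (W (A γ')).toReal + (W D).toReal := by
    have h2 : ENNReal.ofReal ε ≤ W (A γ') + W D := by rw [hWAD]; exact hWBge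
    have h3 := (ENNReal.ofReal_le_iff_le_toReal
      (ENNReal.add_ne_top.2 ⟨ha_fin, hd_fin⟩)).1 h2
    rwa [ENNReal.toReal_add ha_fin hd_fin] at h3
  have hc1 : c ≤ 1 := by
    rw [hc_def]; split_ifs with h
    · exact zero_le_one
    · rw [div_le_one (ENNReal.toReal_pos h hd_fin)]
      linarith
  have hfc : W (A γ') + ENNReal.ofReal c * W D = ENNReal.ofReal ε := by
    rw [hc_def]; split_ifs with h
    · rw [ENNReal.ofReal_zero, zero_mul, add_zero]
      refine le_antisymm hgγ' ?_
      have h2 := hWBge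
      rw [← hWAD, h, add_zero] at h2
      exact h2
    · have hdpos : 0 < (W D).toReal := ENNReal.toReal_pos h hd_fin
      have hdd : ENNReal.ofReal ((ε - (W (A γ')).toReal)/(W D).toReal) * W D
          = ENNReal.ofReal (ε - (W (A γ')).toReal) := by
        nth_rewrite 2 [← ENNReal.ofReal_toReal hd_fin]
        rw [← ENNReal.ofReal_mul (div_nonneg (sub_nonneg.2 hatr) ENNReal.toReal_nonneg),
          div_mul_cancel₀ _ hdpos.ne']
      rw [hdd]
      nth_rewrite 1 [← ENNReal.ofReal_toReal ha_fin]
      rw [← ENNReal.ofReal_add ENNReal.toReal_nonneg (sub_nonneg.2 hatr), add_sub_cancel]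
  -- the test
  set T : Ω → ℝ := fun x => if x ∈ A γ' then 1 else if x ∈ D then c else 0 with hT_def
  have hTmeas : Measurable T := Measurable.ite (hAmeas γ') measurable_const
    (Measurable.ite hDmeas measurable_const measurable_const)
  have hTr : ∀ x, T x ∈ Set.Icc (0:ℝ) 1 := by
    intro x; simp only [hT_def]; split_ifs
    · exact ⟨zero_le_one, le_rfl⟩
    · exact ⟨hc0, hc1⟩
    · exact ⟨le_rfl, zero_le_one⟩
  have hWint : ∫⁻ x, ENNReal.ofReal (T x) ∂W
      = W (A γ') + ENNReal.ofReal c * W D := by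
    have heq : (fun x => ENNReal.ofReal (T x)) = fun x =>
        (A γ').indicator (fun _ => 1) x + D.indicator (fun _ => ENNReal.ofReal c) x := by
      funext x
      by_cases hxA : x ∈ A γ'
      · simp [hT_def, hxA, Set.indicator_apply, show x ∉ D from fun h => h.2 hxA]
      · by_cases hxD : x ∈ D
        · simp [hT_def, hxA, hxD, Set.indicator_apply]
        · simp [hT_def, hxA, hxD, Set.indicator_apply]
    rw [heq, lintegral_add_left (measurable_const.indicator (hAmeas γ')),
      lintegral_indicator (hAmeas γ'), lintegral_indicator hDmeas,
      setLIntegral_const, setLIntegral_const, one_mul]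
  have hQint : ∫⁻ x, ENNReal.ofReal (1 - T x) ∂Q
      = ENNReal.ofReal (1-c) * Q D + Q Bᶜ := by
    have heq : (fun x => ENNReal.ofReal (1 - T x)) = fun x =>
        D.indicator (fun _ => ENNReal.ofReal (1-c)) x + Bᶜ.indicator (fun _ => 1) x := by
      funext x
      by_cases hxA : x ∈ A γ'
      · simp [hT_def, hxA, Set.indicator_apply, show x ∉ D from fun h => h.2 hxA,
          show x ∈ B from hAB hxA]
      · by_cases hxD : x ∈ D
        · simp [hT_def, hxA, hxD, Set.indicator_apply, show x ∈ B from hxD.1]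
        · have hxB : x ∉ B := fun h => hxD ⟨h, hxA⟩
          simp [hT_def, hxA, hxD, hxB, Set.indicator_apply]
    rw [heq, lintegral_add_left (measurable_const.indicator hDmeas),
      lintegral_indicator hDmeas, lintegral_indicator hBmeas.compl,
      setLIntegral_const, setLIntegral_const, one_mul]
  have hQD : Q D = oγ * W D := by
    rw [hQA _ hDmeas, hWA _ hDmeas, ← lintegral_const_mul _ hw]
    exact setLIntegral_congr_fun hDmeas (fun x hx => hDq x hx)
  have hEta : entSpecQW Q W ρ γ' = oγ * W (A γ') + Q D + Q Bᶜ := by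
    have hsplit : entSpecQW Q W ρ γ' = (∫⁻ x in B, min (q x) (oγ * w x) ∂ρ)
        + ∫⁻ x in Bᶜ, min (q x) (oγ * w x) ∂ρ := by
      simp only [entSpecQW, ← hw_def, ← hq_def, ← hoγ_def]
      exact (lintegral_add_compl _ hBmeas).symm
    have h_A : ∫⁻ x in A γ', min (q x) (oγ * w x) ∂ρ = oγ * W (A γ') := by
      rw [hWA _ (hAmeas γ'), ← lintegral_const_mul _ hw]
      exact setLIntegral_congr_fun (hAmeas γ')
        (fun x hx => min_eq_right (le_of_lt hx))
    have h_D : ∫⁻ x in D, min (q x) (oγ * w x) ∂ρ = Q D := by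
      rw [hQA _ hDmeas]
      exact setLIntegral_congr_fun hDmeas
        (fun x hx => min_eq_left (le_of_eq (hDq x hx)))
    have h_Bc : ∫⁻ x in Bᶜ, min (q x) (oγ * w x) ∂ρ = Q Bᶜ := by
      rw [hQA _ hBmeas.compl]
      exact setLIntegral_congr_fun hBmeas.compl
        (fun x hx => min_eq_left (hBcomp x hx))
    have hBsplit : ∫⁻ x in B, min (q x) (oγ * w x) ∂ρ
        = (∫⁻ x in A γ', min (q x) (oγ * w x) ∂ρ)
          + ∫⁻ x in D, min (q x) (oγ * w x) ∂ρ := by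
      conv_lhs => rw [show B = A γ' ∪ D from (Set.union_diff_cancel hAB).symm]
      exact lintegral_union hDmeas disjoint_sdiff_right
    rw [hsplit, hBsplit, h_A, h_D, h_Bc]
  have hEtaFin : entSpecQW Q W ρ γ' ≠ ⊤ := entSpec_ne_top Q W ρ h1 γ'
  have hcc : ENNReal.ofReal (1-c) + ENNReal.ofReal c = 1 := by
    rw [← ENNReal.ofReal_add (by linarith) hc0, sub_add_cancel, ENNReal.ofReal_one]
  have hkey : (ENNReal.ofReal (1-c) * Q D + Q Bᶜ) + ENNReal.ofReal (γ' * ε)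
      = entSpecQW Q W ρ γ' := by
    rw [hEta, ENNReal.ofReal_mul hγ'0, ← hfc, hQD]
    calc ENNReal.ofReal (1-c) * (oγ * W D) + Q Bᶜ
          + oγ * (W (A γ') + ENNReal.ofReal c * W D)
        = oγ * W (A γ')
          + (ENNReal.ofReal (1-c) + ENNReal.ofReal c) * (oγ * W D) + Q Bᶜ := by ring
      _ = oγ * W (A γ') + oγ * W D + Q Bᶜ := by rw [hcc, one_mul]
  have hfeas : ((∫⁻ x, ENNReal.ofReal (T x) ∂W : ℝ≥0∞) : EReal) ≤ (ε : EReal) := by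
    rw [hWint, hfc, coe_ereal_ofReal hε]
  refine le_trans (betaNPE_le Q W ε hTmeas hTr hfeas) ?_
  have hVE : ((∫⁻ x, ENNReal.ofReal (1 - T x) ∂Q : ℝ≥0∞) : EReal)
      = (entSpecQW Q W ρ γ' : EReal) - ((γ' * ε : ℝ) : EReal) := by
    rw [hQint]
    have h2 : (entSpecQW Q W ρ γ' : EReal)
        = ((ENNReal.ofReal (1-c) * Q D + Q Bᶜ : ℝ≥0∞) : EReal) + ((γ' * ε : ℝ) : EReal) := by
      rw [← coe_ereal_ofReal (mul_nonneg hγ'0 hε), ← EReal.coe_ennreal_add, hkey]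
    rw [h2, EReal.add_sub_cancel_right]
  rw [hVE]
  exact le_iSup₂_of_le γ' hγ'0 le_rfl

lemma term_repr (Q W ρ : Measure Ω)
    (h1 : ∫⁻ x, min (W.rnDeriv ρ x) (Q.rnDeriv ρ x) ∂ρ ≠ ⊤) (γ ε : ℝ) :
    (entSpecQW Q W ρ γ : EReal) - ((γ * ε : ℝ) : EReal)
      = (((entSpecQW Q W ρ γ).toReal - γ * ε : ℝ) : EReal) := by
  rw [EReal.coe_sub]
  congr 1
  rw [← ENNReal.ofReal_toReal (entSpec_ne_top Q W ρ h1 γ),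
    coe_ereal_ofReal ENNReal.toReal_nonneg, ENNReal.toReal_ofReal ENNReal.toReal_nonneg]

/-- Convex-conjugate (dual) characterization of `β`: for σ-finite `W, Q ≪ ρ` with
`∫ min(dW/dρ, dQ/dρ) dρ < ∞`, `β(ε) = sup_{γ ≥ 0} (η(γ) − γ·ε)` for all real `ε`;
in particular `β` is nonincreasing, lower semicontinuous, and convex. -/
theorem betaNP_dual_characterization (Q W ρ : Measure Ω)
    [SigmaFinite W] [SigmaFinite Q] [SigmaFinite ρ]
    (hW : W ≪ ρ) (hQ : Q ≪ ρ)
    (h1 : ∫⁻ x, min (W.rnDeriv ρ x) (Q.rnDeriv ρ x) ∂ρ ≠ ⊤) :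
    (∀ ε : ℝ, betaNPE Q W ε
        = ⨆ (γ : ℝ) (_ : 0 ≤ γ),
            ((entSpecQW Q W ρ γ : EReal) - ((γ * ε : ℝ) : EReal))) ∧
    Antitone (betaNPE Q W) ∧
    LowerSemicontinuous (betaNPE Q W) ∧
    (∀ a b t : ℝ, 0 ≤ t → t ≤ 1 →
      betaNPE Q W (t * a + (1 - t) * b)
        ≤ (t : EReal) * betaNPE Q W a + ((1 - t : ℝ) : EReal) * betaNPE Q W b) := by
  have hdual : ∀ ε : ℝ, betaNPE Q W ε
      = ⨆ (γ : ℝ) (_ : 0 ≤ γ),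
          ((entSpecQW Q W ρ γ : EReal) - ((γ * ε : ℝ) : EReal)) := by
    intro ε
    rcases lt_or_ge ε 0 with hneg | hε
    · have hbeta : betaNPE Q W ε = ⊤ := by
        rw [eq_top_iff, betaNPE]
        refine le_iInf fun T => le_iInf fun _ => le_iInf fun _ => le_iInf fun hc => ?_
        exfalso
        have h0 : (0 : EReal) ≤ (ε : EReal) :=
          le_trans (EReal.coe_ennreal_nonneg _) hc
        rw [show (0:EReal) = ((0:ℝ):EReal) from rfl, EReal.coe_le_coe_iff] at h0
        linarith
      have hterm : ∀ γ : ℝ, 0 ≤ γ →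
          ((γ * (-ε) : ℝ) : EReal) ≤ ⨆ (γ : ℝ) (_ : 0 ≤ γ),
            ((entSpecQW Q W ρ γ : EReal) - ((γ * ε : ℝ) : EReal)) := by
        intro γ hγ
        refine le_iSup₂_of_le γ hγ ?_
        have h2 : (0 : EReal) - ((γ*ε:ℝ):EReal)
            ≤ (entSpecQW Q W ρ γ : EReal) - ((γ*ε:ℝ):EReal) :=
          EReal.sub_le_sub (EReal.coe_ennreal_nonneg _) le_rfl
        calc ((γ * (-ε) : ℝ) : EReal) = 0 - ((γ*ε:ℝ):EReal) := by
              rw [zero_sub, ← EReal.coe_neg]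
              congr 1
              ring
          _ ≤ _ := h2
      have hsup : (⨆ (γ : ℝ) (_ : 0 ≤ γ),
          ((entSpecQW Q W ρ γ : EReal) - ((γ * ε : ℝ) : EReal))) = ⊤ := by
        rw [EReal.eq_top_iff_forall_lt]
        intro y
        by_cases hy : 0 ≤ y
        · refine lt_of_lt_of_le ?_ (hterm ((y+1)/(-ε)) (div_nonneg (by linarith) (by linarith)))
          rw [EReal.coe_lt_coe_iff, div_mul_cancel₀ _ (by linarith : (-ε) ≠ 0)]
          linarith
        · refine lt_of_lt_of_le ?_ (hterm 0 le_rfl)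
          rw [zero_mul, EReal.coe_lt_coe_iff]
          linarith
      rw [hbeta, hsup]
    · refine le_antisymm (strong_duality Q W ρ hW hQ h1 hε) ?_
      refine iSup₂_le fun γ hγ => le_iInf fun T => le_iInf fun hT =>
        le_iInf fun hTr => le_iInf fun hfeas => ?_
      exact weak_duality Q W ρ hW hQ hε hγ hT hTr hfeas
  refine ⟨hdual, ?_, ?_, ?_⟩
  · intro a b hab
    refine le_iInf fun T => le_iInf fun hT => le_iInf fun hTr => le_iInf fun hc =>
      betaNPE_le Q W b hT hTr (hc.trans (EReal.coe_le_coe_iff.2 hab))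
  · have hfun : betaNPE Q W = fun ε => ⨆ (γ : ℝ) (_ : 0 ≤ γ),
        ((entSpecQW Q W ρ γ : EReal) - ((γ * ε : ℝ) : EReal)) := funext hdual
    rw [hfun]
    refine lowerSemicontinuous_iSup fun γ => lowerSemicontinuous_iSup fun hγ => ?_
    have hre : (fun ε : ℝ => (entSpecQW Q W ρ γ : EReal) - ((γ*ε:ℝ):EReal))
        = fun ε : ℝ => (((entSpecQW Q W ρ γ).toReal - γ*ε : ℝ) : EReal) := by
      funext ε
      exact term_repr Q W ρ h1 γ ε
    rw [hre]
    exact (continuous_coe_real_ereal.comp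
      (continuous_const.sub (continuous_const.mul continuous_id))).lowerSemicontinuous
  · intro a b t ht0 ht1
    rw [hdual, hdual, hdual]
    refine iSup₂_le fun γ hγ => ?_
    have hmul : ∀ (s x : ℝ) (X : EReal), 0 ≤ s → (x:EReal) ≤ X
        → ((s * x : ℝ):EReal) ≤ (s:EReal) * X := by
      intro s x X hs hx
      rw [EReal.coe_mul]
      exact mul_le_mul_of_nonneg_left hx (EReal.coe_nonneg.2 hs)
    have hA : (((entSpecQW Q W ρ γ).toReal - γ*a : ℝ):EReal)
        ≤ ⨆ (γ : ℝ) (_ : 0 ≤ γ),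
          ((entSpecQW Q W ρ γ : EReal) - ((γ * a : ℝ) : EReal)) :=
      le_iSup₂_of_le γ hγ (le_of_eq (term_repr Q W ρ h1 γ a).symm)
    have hB : (((entSpecQW Q W ρ γ).toReal - γ*b : ℝ):EReal)
        ≤ ⨆ (γ : ℝ) (_ : 0 ≤ γ),
          ((entSpecQW Q W ρ γ : EReal) - ((γ * b : ℝ) : EReal)) :=
      le_iSup₂_of_le γ hγ (le_of_eq (term_repr Q W ρ h1 γ b).symm)
    rw [term_repr Q W ρ h1 γ]
    calc (((entSpecQW Q W ρ γ).toReal - γ*(t*a+(1-t)*b) : ℝ):EReal)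
        = ((t*((entSpecQW Q W ρ γ).toReal - γ*a)
            + (1-t)*((entSpecQW Q W ρ γ).toReal - γ*b) : ℝ):EReal) := by
          congr 1
          ring
      _ = ((t*((entSpecQW Q W ρ γ).toReal - γ*a) : ℝ):EReal)
            + (((1-t)*((entSpecQW Q W ρ γ).toReal - γ*b) : ℝ):EReal) := by
          rw [EReal.coe_add]
      _ ≤ _ := add_le_add (hmul _ _ _ ht0 hA) (hmul _ _ _ (by linarith) hB)
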